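/- arXiv:2205.12513 — 5 statements merged into one kernel-verified Lean document; each statement's English description precedes it below -/
import Mathlib

section
/- The limits m^* = lim_{φ → +∞} f^*(φ) and M^* = lim_{φ → −∞} f^*(φ) exist and are finite, with m^* < 0 and M^* > 0, and moreover m^* < f^*(φ) < M^* for every φ ∈ ℝ. -/
open Filter Real Set
open Topology

noncomputable def Ef (lam μb z : ℕ → ℝ) (u : ℝ → ℝ) (j : ℕ) (φ : ℝ) : ℝ :=
  Real.exp (lam j / lam 0 * u φ + (μb j - z j * φ))

noncomputable def Ff (N : ℕ) (lam μb z : ℕ → ℝ) (u : ℝ → ℝ) (φ : ℝ) : ℝ :=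
  ∑ i ∈ Finset.Icc 1 N, z i * Ef lam μb z u i φ

lemma Ef_pos (lam μb z : ℕ → ℝ) (u : ℝ → ℝ) (j : ℕ) (φ : ℝ) : 0 < Ef lam μb z u j φ :=
  Real.exp_pos _

lemma aux_pos {r : ℝ} (h : r ≠ 0) : 0 < r * (Real.exp r - 1) := by
  rcases h.lt_or_gt with hneg | hpos
  · have h1 : Real.exp r < 1 := by
      have := Real.exp_lt_exp.mpr hneg
      simpa using this
    nlinarith
  · have h1 : 1 < Real.exp r := by
      have := Real.exp_lt_exp.mpr hpos
      simpa using this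
    nlinarith

lemma aux_nonneg (r : ℝ) : 0 ≤ r * (Real.exp r - 1) := by
  rcases eq_or_ne r 0 with h | h
  · simp [h]
  · exact (aux_pos h).le

lemma range_split (N : ℕ) : Finset.range (N+1) = insert 0 (Finset.Icc 1 N) := by
  ext j
  simp only [Finset.mem_range, Finset.mem_insert, Finset.mem_Icc, Nat.lt_succ_iff]
  omega

lemma zero_not_Icc (N : ℕ) : (0:ℕ) ∉ Finset.Icc 1 N := by simp

theorem helperAnti (N : ℕ) (z lam μb : ℕ → ℝ) (μt : ℝ) (u : ℝ → ℝ)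
    (hz0 : z 0 = 0)
    (hzex : ∃ i, 1 ≤ i ∧ i ≤ N ∧ z i ≠ 0)
    (hlam : ∀ i, i ≤ N → 0 < lam i)
    (hsum : ∀ φ, ∑ j ∈ Finset.range (N+1), lam j * Ef lam μb z u j φ = μt) :
    StrictAnti (Ff N lam μb z u) := by
  intro φ1 φ2 hlt
  have hlam0 : 0 < lam 0 := hlam 0 (Nat.zero_le N)
  have hΔ : 0 < φ2 - φ1 := sub_pos.mpr hlt
  set r : ℕ → ℝ := fun j => lam j / lam 0 * (u φ2 - u φ1) - z j * (φ2 - φ1) with hr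
  have hstep : ∀ j, Ef lam μb z u j φ2 = Ef lam μb z u j φ1 * Real.exp (r j) := by
    intro j
    simp only [Ef, hr, ← Real.exp_add]
    congr 1
    ring
  have hzero : ∑ j ∈ Finset.range (N+1),
      lam j * Ef lam μb z u j φ1 * (Real.exp (r j) - 1) = 0 := by
    have e : ∑ j ∈ Finset.range (N+1), lam j * Ef lam μb z u j φ1 * (Real.exp (r j) - 1)
        = ∑ j ∈ Finset.range (N+1),
            (lam j * Ef lam μb z u j φ2 - lam j * Ef lam μb z u j φ1) := by
      refine Finset.sum_congr rfl fun j _ => ?_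
      rw [hstep j]; ring
    rw [e, Finset.sum_sub_distrib, hsum φ1, hsum φ2, sub_self]
  have e1 : ∑ j ∈ Finset.range (N+1), z j * Ef lam μb z u j φ1 * (Real.exp (r j) - 1)
      = Ff N lam μb z u φ2 - Ff N lam μb z u φ1 := by
    rw [range_split N, Finset.sum_insert (zero_not_Icc N), hz0]
    simp only [zero_mul, zero_add]
    simp only [Ff, ← Finset.sum_sub_distrib]
    refine Finset.sum_congr rfl fun j _ => ?_
    rw [hstep j]; ring
  have e2 : ∑ j ∈ Finset.range (N+1), z j * Ef lam μb z u j φ1 * (Real.exp (r j) - 1)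
      = (1/(φ2 - φ1)) * (((u φ2 - u φ1) / lam 0) *
          ∑ j ∈ Finset.range (N+1), lam j * Ef lam μb z u j φ1 * (Real.exp (r j) - 1)
        - ∑ j ∈ Finset.range (N+1), Ef lam μb z u j φ1 * (r j * (Real.exp (r j) - 1))) := by
    rw [Finset.mul_sum, ← Finset.sum_sub_distrib, Finset.mul_sum]
    refine Finset.sum_congr rfl fun j _ => ?_
    have hΔne : φ2 - φ1 ≠ 0 := ne_of_gt hΔ
    have hl0ne : lam 0 ≠ 0 := ne_of_gt hlam0
    simp only [hr]
    field_simp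
    ring
  have hP : 0 < ∑ j ∈ Finset.range (N+1),
      Ef lam μb z u j φ1 * (r j * (Real.exp (r j) - 1)) := by
    have hex : ∃ i0 ∈ Finset.range (N+1), r i0 ≠ 0 := by
      rcases eq_or_ne (u φ2 - u φ1) 0 with hdu | hdu
      · obtain ⟨i, hi1, hiN, hzi⟩ := hzex
        refine ⟨i, ?_, ?_⟩
        · simp only [Finset.mem_range, Nat.lt_succ_iff]; exact hiN
        · simp only [hr, hdu, mul_zero, zero_sub, ne_eq, neg_eq_zero]
          exact mul_ne_zero hzi (ne_of_gt hΔ)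
      · refine ⟨0, by simp, ?_⟩
        simp only [hr, hz0, zero_mul, sub_zero, div_self (ne_of_gt hlam0), one_mul]
        exact hdu
    obtain ⟨i0, hi0, hri0⟩ := hex
    refine Finset.sum_pos' (fun j _ => mul_nonneg (Ef_pos ..).le (aux_nonneg _)) ⟨i0, hi0, ?_⟩
    exact mul_pos (Ef_pos ..) (aux_pos hri0)
  have hdiff : Ff N lam μb z u φ2 - Ff N lam μb z u φ1 < 0 := by
    rw [← e1, e2, hzero, mul_zero, zero_sub]
    have h1 : 0 < 1/(φ2 - φ1) := by positivity
    nlinarith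
  linarith

theorem helperMain (N : ℕ) (z lam μb : ℕ → ℝ) (μt : ℝ) (u : ℝ → ℝ)
    (hz0 : z 0 = 0)
    (hmix : ∃ i j, 1 ≤ i ∧ i ≤ N ∧ 1 ≤ j ∧ j ≤ N ∧ z i * z j < 0)
    (hlam : ∀ i, i ≤ N → 0 < lam i)
    (hμt : 0 < μt)
    (hsum : ∀ φ, ∑ j ∈ Finset.range (N+1), lam j * Ef lam μb z u j φ = μt) :
    ∃ m, Tendsto (Ff N lam μb z u) atTop (𝓝 m) ∧ m < 0 ∧
      ∀ φ, m < Ff N lam μb z u φ := by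
  have hlam0 : 0 < lam 0 := hlam 0 (Nat.zero_le N)
  obtain ⟨g, hg1, hgN, hzg⟩ : ∃ g, 1 ≤ g ∧ g ≤ N ∧ z g < 0 := by
    obtain ⟨i, j, hi1, hiN, hj1, hjN, hzz⟩ := hmix
    rcases mul_neg_iff.mp hzz with ⟨h1, h2⟩ | ⟨h1, h2⟩
    · exact ⟨j, hj1, hjN, h2⟩
    · exact ⟨i, hi1, hiN, h1⟩
  have hzex : ∃ i, 1 ≤ i ∧ i ≤ N ∧ z i ≠ 0 := ⟨g, hg1, hgN, ne_of_lt hzg⟩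
  have hAnti : StrictAnti (Ff N lam μb z u) := helperAnti N z lam μb μt u hz0 hzex hlam hsum
  have hterm : ∀ (φ : ℝ) (j : ℕ), j ≤ N → lam j * Ef lam μb z u j φ ≤ μt := by
    intro φ j hj
    rw [← hsum φ]
    refine Finset.single_le_sum (f := fun k => lam k * Ef lam μb z u k φ) ?_ ?_
    · intro k hk
      have hkN : k ≤ N := Nat.lt_succ_iff.mp (Finset.mem_range.mp hk)
      exact (mul_pos (hlam k hkN) (Ef_pos ..)).le
    · simp only [Finset.mem_range, Nat.lt_succ_iff]; exact hj
  have hEle : ∀ (φ : ℝ) (j : ℕ), j ≤ N → Ef lam μb z u j φ ≤ μt / lam j := by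
    intro φ j hj
    rw [le_div_iff₀ (hlam j hj)]
    have h := hterm φ j hj
    linarith [mul_comm (Ef lam μb z u j φ) (lam j), h]
  set B : ℝ := ∑ i ∈ Finset.Icc 1 N, |z i| * (μt / lam i) with hB
  have hFbd : ∀ φ, |Ff N lam μb z u φ| ≤ B := by
    intro φ
    refine (Finset.abs_sum_le_sum_abs _ _).trans ?_
    refine Finset.sum_le_sum fun i hi => ?_
    have hiN : i ≤ N := (Finset.mem_Icc.mp hi).2
    rw [abs_mul, abs_of_pos (Ef_pos ..)]
    exact mul_le_mul_of_nonneg_left (hEle φ i hiN) (abs_nonneg _)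
  have hbdd : BddBelow (Set.range (Ff N lam μb z u)) := by
    refine ⟨-B, ?_⟩
    rintro x ⟨φ, rfl⟩
    have h := abs_le.mp (hFbd φ)
    linarith [h.1]
  have hmT : Tendsto (Ff N lam μb z u) atTop (𝓝 (⨅ φ, Ff N lam μb z u φ)) :=
    tendsto_atTop_ciInf hAnti.antitone hbdd
  set m := ⨅ φ, Ff N lam μb z u φ with hm
  have hmlt : ∀ φ, m < Ff N lam μb z u φ := by
    intro φ
    have h1 : m ≤ Ff N lam μb z u (φ + 1) := ciInf_le hbdd (φ + 1)
    have h2 : Ff N lam μb z u (φ+1) < Ff N lam μb z u φ := hAnti (lt_add_one φ)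
    linarith
  -- u tends to -infinity
  have hag : 0 < lam g / lam 0 := div_pos (hlam g hgN) hlam0
  have hub : ∀ φ, lam g / lam 0 * u φ + (μb g - z g * φ) ≤ Real.log (μt / lam g) := by
    intro φ
    have h2 : Ef lam μb z u g φ ≤ μt / lam g := hEle φ g hgN
    have h3 : Real.exp (lam g / lam 0 * u φ + (μb g - z g * φ))
        ≤ Real.exp (Real.log (μt / lam g)) := by
      rw [Real.exp_log (div_pos hμt (hlam g hgN))]
      exact h2
    exact Real.exp_le_exp.mp h3
  have huB : Tendsto u atTop atBot := by
    have hle : ∀ φ, u φ ≤ (Real.log (μt / lam g) - μb g + z g * φ) / (lam g / lam 0) := by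
      intro φ
      rw [le_div_iff₀ hag]
      have h := hub φ
      linarith [mul_comm (u φ) (lam g / lam 0), h]
    refine tendsto_atBot_mono hle ?_
    refine (tendsto_div_const_atBot_of_pos hag).mpr ?_
    refine tendsto_atBot_add_const_left _ _ ?_
    exact (tendsto_const_mul_atBot_of_neg hzg).mpr tendsto_id
  have hEz : ∀ j, j ≤ N → 0 ≤ z j →
      Tendsto (fun φ => Ef lam μb z u j φ) atTop (𝓝 0) := by
    intro j hjN hzj
    have haj : 0 < lam j / lam 0 := div_pos (hlam j hjN) hlam0
    have hexp : Tendsto (fun φ => lam j / lam 0 * u φ + (μb j - z j * φ)) atTop atBot := by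
      have h1 : Tendsto (fun φ => lam j / lam 0 * u φ + μb j) atTop atBot :=
        tendsto_atBot_add_const_right _ _ ((tendsto_const_mul_atBot_of_pos haj).mpr huB)
      refine tendsto_atBot_mono' atTop ?_ h1
      filter_upwards [eventually_ge_atTop (0:ℝ)] with φ hφ
      have := mul_nonneg hzj hφ
      linarith
    exact Real.tendsto_exp_atBot.comp hexp
  set negset := (Finset.Icc 1 N).filter (fun j => z j < 0) with hns
  set posset := (Finset.Icc 1 N).filter (fun j => ¬ z j < 0) with hps
  have hsplitsum : ∀ φ, ∑ j ∈ negset, lam j * Ef lam μb z u j φ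
      = μt - lam 0 * Ef lam μb z u 0 φ - ∑ j ∈ posset, lam j * Ef lam μb z u j φ := by
    intro φ
    have h := hsum φ
    rw [range_split N, Finset.sum_insert (zero_not_Icc N),
      ← Finset.sum_filter_add_sum_filter_not (Finset.Icc 1 N) (fun j => z j < 0)] at h
    rw [← hns, ← hps] at h
    linarith
  have hposmem : ∀ j ∈ posset, j ≤ N ∧ 0 ≤ z j := by
    intro j hj
    rw [hps, Finset.mem_filter, Finset.mem_Icc] at hj
    exact ⟨hj.1.2, not_lt.mp hj.2⟩
  have hpos0 : Tendsto (fun φ => ∑ j ∈ posset, lam j * Ef lam μb z u j φ) atTop (𝓝 0) := by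
    have h : Tendsto (fun φ => ∑ j ∈ posset, lam j * Ef lam μb z u j φ) atTop
        (𝓝 (∑ j ∈ posset, (0:ℝ))) := by
      refine tendsto_finset_sum _ fun j hj => ?_
      obtain ⟨hjN, hzj⟩ := hposmem j hj
      simpa using (hEz j hjN hzj).const_mul (lam j)
    simpa using h
  have hSneg : Tendsto (fun φ => ∑ j ∈ negset, lam j * Ef lam μb z u j φ) atTop (𝓝 μt) := by
    have h0 : Tendsto (fun φ => Ef lam μb z u 0 φ) atTop (𝓝 0) :=
      hEz 0 (Nat.zero_le N) (le_of_eq hz0.symm)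
    have h1 : Tendsto (fun φ => μt - lam 0 * Ef lam μb z u 0 φ
        - ∑ j ∈ posset, lam j * Ef lam μb z u j φ) atTop (𝓝 (μt - lam 0 * 0 - 0)) :=
      (tendsto_const_nhds.sub (h0.const_mul _)).sub hpos0
    have h2 : (fun φ => ∑ j ∈ negset, lam j * Ef lam μb z u j φ)
        = fun φ => μt - lam 0 * Ef lam μb z u 0 φ
            - ∑ j ∈ posset, lam j * Ef lam μb z u j φ := funext hsplitsum
    rw [h2]
    simpa using h1
  have hgneg : g ∈ negset := by
    rw [hns, Finset.mem_filter, Finset.mem_Icc]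
    exact ⟨⟨hg1, hgN⟩, hzg⟩
  have hne : negset.Nonempty := ⟨g, hgneg⟩
  set M' := negset.sup' hne (fun j => z j / lam j) with hM'
  have hM'neg : M' < 0 := by
    rw [hM', Finset.sup'_lt_iff]
    intro j hj
    rw [hns, Finset.mem_filter, Finset.mem_Icc] at hj
    exact div_neg_of_neg_of_pos hj.2 (hlam j hj.1.2)
  have hFle : ∀ φ, Ff N lam μb z u φ ≤
      (∑ j ∈ posset, z j * Ef lam μb z u j φ)
        + M' * ∑ j ∈ negset, lam j * Ef lam μb z u j φ := by
    intro φ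
    have hFsplit : Ff N lam μb z u φ = (∑ j ∈ negset, z j * Ef lam μb z u j φ)
        + ∑ j ∈ posset, z j * Ef lam μb z u j φ := by
      simp only [Ff]
      rw [hns, hps, Finset.sum_filter_add_sum_filter_not]
    have hneg_le : ∑ j ∈ negset, z j * Ef lam μb z u j φ
        ≤ M' * ∑ j ∈ negset, lam j * Ef lam μb z u j φ := by
      rw [Finset.mul_sum]
      refine Finset.sum_le_sum fun j hj => ?_
      have hjm := hj
      rw [hns, Finset.mem_filter, Finset.mem_Icc] at hjm
      have hlamj : 0 < lam j := hlam j hjm.1.2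
      have h1 : z j / lam j ≤ M' := by
        rw [hM']; exact Finset.le_sup' (fun k => z k / lam k) hj
      have h2 : z j * Ef lam μb z u j φ
          = (z j / lam j) * (lam j * Ef lam μb z u j φ) := by
        field_simp
      rw [h2]
      exact mul_le_mul_of_nonneg_right h1 (mul_pos hlamj (Ef_pos ..)).le
    linarith [hFsplit, hneg_le]
  have hposz0 : Tendsto (fun φ => ∑ j ∈ posset, z j * Ef lam μb z u j φ) atTop (𝓝 0) := by
    have h : Tendsto (fun φ => ∑ j ∈ posset, z j * Ef lam μb z u j φ) atTop
        (𝓝 (∑ j ∈ posset, (0:ℝ))) := by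
      refine tendsto_finset_sum _ fun j hj => ?_
      obtain ⟨hjN, hzj⟩ := hposmem j hj
      simpa using (hEz j hjN hzj).const_mul (z j)
    simpa using h
  have hRHS : Tendsto (fun φ => (∑ j ∈ posset, z j * Ef lam μb z u j φ)
      + M' * ∑ j ∈ negset, lam j * Ef lam μb z u j φ) atTop (𝓝 (0 + M' * μt)) :=
    hposz0.add (hSneg.const_mul M')
  have hmle : m ≤ 0 + M' * μt := le_of_tendsto_of_tendsto' hmT hRHS hFle
  have hMneg : M' * μt < 0 := mul_neg_of_neg_of_pos hM'neg hμt
  exact ⟨m, hmT, by linarith, hmlt⟩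

theorem stmt15
    (N : ℕ) (hN : 1 ≤ N)
    (z lam μhat : ℕ → ℝ) (μtilde0 : ℝ)
    (hz0 : z 0 = 0)
    (hzne : ∀ i, 1 ≤ i → i ≤ N → z i ≠ 0)
    (hmix : ∃ i j, 1 ≤ i ∧ i ≤ N ∧ 1 ≤ j ∧ j ≤ N ∧ z i * z j < 0)
    (hlam : ∀ i, i ≤ N → 0 < lam i)
    (hμt : 0 < μtilde0)
    (hμhat : ∀ i, i ≤ N → 0 < μhat i)
    (μbar : ℕ → ℝ) (hμbar : ∀ i, μbar i = μhat i - lam i / lam 0 * μhat 0)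
    (c0s : ℝ → ℝ) (hc0spos : ∀ φ, 0 < c0s φ)
    (hc0seq : ∀ φ : ℝ, ∑ j ∈ Finset.range (N+1),
        lam j * (c0s φ) ^ (lam j / lam 0) * Real.exp (μbar j - z j * φ) = μtilde0)
    :
    ∃ mstar Mstar : ℝ,
      Filter.Tendsto (fun φ : ℝ => ∑ i ∈ Finset.Icc 1 N, z i * ((c0s φ) ^ (lam i / lam 0) * Real.exp (μbar i - z i * φ))) Filter.atTop (nhds mstar) ∧
      Filter.Tendsto (fun φ : ℝ => ∑ i ∈ Finset.Icc 1 N, z i * ((c0s φ) ^ (lam i / lam 0) * Real.exp (μbar i - z i * φ))) Filter.atBot (nhds Mstar) ∧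
      mstar < 0 ∧ 0 < Mstar ∧
      (∀ φ : ℝ, mstar < ∑ i ∈ Finset.Icc 1 N, z i * ((c0s φ) ^ (lam i / lam 0) * Real.exp (μbar i - z i * φ)) ∧ ∑ i ∈ Finset.Icc 1 N, z i * ((c0s φ) ^ (lam i / lam 0) * Real.exp (μbar i - z i * φ)) < Mstar) := by
  have hlam0 : 0 < lam 0 := hlam 0 (Nat.zero_le N)
  have hkey : ∀ (i : ℕ) (φ : ℝ), (c0s φ) ^ (lam i / lam 0) * Real.exp (μbar i - z i * φ)
      = Real.exp (lam i / lam 0 * Real.log (c0s φ) + (μbar i - z i * φ)) := by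
    intro i φ
    rw [Real.rpow_def_of_pos (hc0spos φ), ← Real.exp_add]
    congr 1
    ring
  have hsum' : ∀ φ, ∑ j ∈ Finset.range (N+1),
      lam j * Ef lam μbar z (fun t => Real.log (c0s t)) j φ = μtilde0 := by
    intro φ
    rw [← hc0seq φ]
    refine Finset.sum_congr rfl fun j _ => ?_
    rw [mul_assoc, hkey j φ]
    rfl
  obtain ⟨m, hmT, hmneg, hmlt⟩ :=
    helperMain N z lam μbar μtilde0 (fun t => Real.log (c0s t)) hz0 hmix hlam hμt hsum'
  -- flipped version for φ → -∞
  have hz0' : (fun k => -z k) 0 = 0 := by simp [hz0]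
  have hmix' : ∃ i j, 1 ≤ i ∧ i ≤ N ∧ 1 ≤ j ∧ j ≤ N ∧
      (fun k => -z k) i * (fun k => -z k) j < 0 := by
    obtain ⟨i, j, h1, h2, h3, h4, h5⟩ := hmix
    exact ⟨i, j, h1, h2, h3, h4, by simpa [neg_mul_neg] using h5⟩
  have hsum2 : ∀ ψ, ∑ j ∈ Finset.range (N+1),
      lam j * Ef lam μbar (fun k => -z k) (fun t => Real.log (c0s (-t))) j ψ = μtilde0 := by
    intro ψ
    rw [← hsum' (-ψ)]
    refine Finset.sum_congr rfl fun j _ => ?_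
    simp only [Ef]
    congr 2
    ring
  obtain ⟨m2, hm2T, hm2neg, hm2lt⟩ :=
    helperMain N (fun k => -z k) lam μbar μtilde0 (fun t => Real.log (c0s (-t)))
      hz0' hmix' hlam hμt hsum2
  have hGF : ∀ ψ : ℝ, Ff N lam μbar (fun k => -z k) (fun t => Real.log (c0s (-t))) ψ
      = -(Ff N lam μbar z (fun t => Real.log (c0s t)) (-ψ)) := by
    intro ψ
    simp only [Ff, Ef, ← Finset.sum_neg_distrib]
    refine Finset.sum_congr rfl fun i _ => ?_
    rw [neg_mul]
    congr 2
    ring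
  have hFbot : Tendsto (Ff N lam μbar z (fun t => Real.log (c0s t))) atBot (𝓝 (-m2)) := by
    have h1 : Tendsto (fun φ : ℝ =>
        Ff N lam μbar (fun k => -z k) (fun t => Real.log (c0s (-t))) (-φ)) atBot (𝓝 m2) :=
      hm2T.comp tendsto_neg_atBot_atTop
    have h2 : (fun φ : ℝ =>
        Ff N lam μbar (fun k => -z k) (fun t => Real.log (c0s (-t))) (-φ))
        = fun φ => -(Ff N lam μbar z (fun t => Real.log (c0s t)) φ) := by
      funext φ
      rw [hGF (-φ), neg_neg]
    rw [h2] at h1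
    have h3 := h1.neg
    simpa using h3
  have hFlt : ∀ φ, Ff N lam μbar z (fun t => Real.log (c0s t)) φ < -m2 := by
    intro φ
    have := hm2lt (-φ)
    rw [hGF (-φ), neg_neg] at this
    linarith
  refine ⟨m, -m2, ?_, ?_, hmneg, by linarith, fun φ => ⟨?_, ?_⟩⟩
  · simp only [hkey]
    exact hmT
  · simp only [hkey]
    exact hFbot
  · simp only [hkey]
    exact hmlt φ
  · simp only [hkey]
    exact hFlt φ
end

section
/- As φ → +∞ one has c_0^*(φ) → 0 and c_i^*(φ) → 0 for every i ∈ {1, …, N} with z_i > 0; symmetrically, as φ → −∞ one has c_0^*(φ) → 0 and c_i^*(φ) → 0 for every i ∈ {1, …, N} with z_i < 0. -/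
open Filter Real Set

lemma key16 (N : ℕ) (z lam μbar : ℕ → ℝ) (μtilde0 : ℝ)
    (hlam : ∀ i, i ≤ N → 0 < lam i)
    (c0s : ℝ → ℝ) (hc0spos : ∀ φ, 0 < c0s φ)
    (hc0seq : ∀ φ : ℝ, ∑ j ∈ Finset.range (N+1),
        lam j * (c0s φ) ^ (lam j / lam 0) * Real.exp (μbar j - z j * φ) = μtilde0)
    (hneg : ∃ i, 1 ≤ i ∧ i ≤ N ∧ z i < 0) :
    Tendsto c0s atTop (nhds 0) ∧
    ∀ i, 1 ≤ i → i ≤ N → 0 < z i →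
      Tendsto (fun φ : ℝ => (c0s φ) ^ (lam i / lam 0) * Real.exp (μbar i - z i * φ)) atTop (nhds 0) := by
  obtain ⟨i, hi1, hiN, hzi⟩ := hneg
  have hl0 : 0 < lam 0 := hlam 0 (Nat.zero_le N)
  have hli : 0 < lam i := hlam i hiN
  set p := lam i / lam 0 with hp
  have hpp : 0 < p := div_pos hli hl0
  -- each term ≤ μtilde0
  have hbound : ∀ φ : ℝ, lam i * (c0s φ) ^ p * Real.exp (μbar i - z i * φ) ≤ μtilde0 := by
    intro φ
    rw [← hc0seq φ]
    apply Finset.single_le_sum (f := fun j => lam j * (c0s φ) ^ (lam j / lam 0) * Real.exp (μbar j - z j * φ))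
    · intro j hj
      have h1 := hlam j (Nat.lt_succ_iff.mp (Finset.mem_range.mp hj))
      have h2 := hc0spos φ
      positivity
    · exact Finset.mem_range.mpr (Nat.lt_succ_iff.mpr hiN)
  have hbound2 : ∀ φ : ℝ, (c0s φ) ^ p ≤ μtilde0 / lam i * Real.exp (z i * φ - μbar i) := by
    intro φ
    have h := hbound φ
    have he : 0 < Real.exp (μbar i - z i * φ) := Real.exp_pos _
    have key : Real.exp (z i * φ - μbar i) = (Real.exp (μbar i - z i * φ))⁻¹ := by
      rw [← Real.exp_neg]; ring_nf
    rw [key, ← div_eq_mul_inv, div_div, le_div_iff₀ (by positivity)]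
    nlinarith [h]
  have htz : Tendsto (fun φ : ℝ => μtilde0 / lam i * Real.exp (z i * φ - μbar i)) atTop (nhds 0) := by
    have h1 : Tendsto (fun φ : ℝ => z i * φ - μbar i) atTop atBot := by
      apply Filter.tendsto_atBot_add_const_right
      exact Filter.Tendsto.const_mul_atTop_of_neg hzi tendsto_id
    have h2 := Real.tendsto_exp_atBot.comp h1
    have := h2.const_mul (μtilde0 / lam i)
    simpa using this
  have hrp : Tendsto (fun φ : ℝ => (c0s φ) ^ p) atTop (nhds 0) := by
    apply squeeze_zero (fun φ => (Real.rpow_pos_of_pos (hc0spos φ) p).le) hbound2 htz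
  have hc0 : Tendsto c0s atTop (nhds 0) := by
    have hcont : ContinuousAt (fun x : ℝ => x ^ (1/p)) 0 :=
      Real.continuousAt_rpow_const 0 (1/p) (Or.inr (by positivity))
    have h := (hcont.tendsto.comp hrp)
    have h0 : ((0:ℝ) ^ (1/p) : ℝ) = 0 := Real.zero_rpow (by positivity)
    rw [Function.comp_def] at h
    simp only [h0] at h
    refine h.congr fun φ => ?_
    rw [← Real.rpow_mul (hc0spos φ).le, mul_one_div, div_self hpp.ne', Real.rpow_one]
  refine ⟨hc0, fun k hk1 hkN hzk => ?_⟩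
  have hpk : 0 < lam k / lam 0 := div_pos (hlam k hkN) hl0
  have h1 : Tendsto (fun φ : ℝ => (c0s φ) ^ (lam k / lam 0)) atTop (nhds 0) := by
    have hcont : ContinuousAt (fun x : ℝ => x ^ (lam k / lam 0)) 0 :=
      Real.continuousAt_rpow_const 0 _ (Or.inr hpk.le)
    have h := hcont.tendsto.comp hc0
    rw [Function.comp_def] at h
    simpa [Real.zero_rpow hpk.ne'] using h
  have h2 : Tendsto (fun φ : ℝ => Real.exp (μbar k - z k * φ)) atTop (nhds 0) := by
    apply Real.tendsto_exp_atBot.comp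
    have h0 : Tendsto (fun φ : ℝ => z k * φ) atTop atTop :=
      Filter.Tendsto.const_mul_atTop hzk tendsto_id
    have hm := tendsto_atBot_add_const_left atTop (μbar k) (tendsto_neg_atTop_atBot.comp h0)
    simpa [sub_eq_add_neg, Function.comp] using hm
  simpa using h1.mul h2

theorem stmt16
    (N : ℕ) (hN : 1 ≤ N)
    (z lam μhat : ℕ → ℝ) (μtilde0 : ℝ)
    (hz0 : z 0 = 0)
    (hzne : ∀ i, 1 ≤ i → i ≤ N → z i ≠ 0)
    (hmix : ∃ i j, 1 ≤ i ∧ i ≤ N ∧ 1 ≤ j ∧ j ≤ N ∧ z i * z j < 0)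
    (hlam : ∀ i, i ≤ N → 0 < lam i)
    (hμt : 0 < μtilde0)
    (hμhat : ∀ i, i ≤ N → 0 < μhat i)
    (μbar : ℕ → ℝ) (hμbar : ∀ i, μbar i = μhat i - lam i / lam 0 * μhat 0)
    (c0s : ℝ → ℝ) (hc0spos : ∀ φ, 0 < c0s φ)
    (hc0seq : ∀ φ : ℝ, ∑ j ∈ Finset.range (N+1),
        lam j * (c0s φ) ^ (lam j / lam 0) * Real.exp (μbar j - z j * φ) = μtilde0)
    :
    Filter.Tendsto c0s Filter.atTop (nhds 0) ∧
    (∀ i, 1 ≤ i → i ≤ N → 0 < z i →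
      Filter.Tendsto (fun φ : ℝ => (c0s φ) ^ (lam i / lam 0) * Real.exp (μbar i - z i * φ)) Filter.atTop (nhds 0)) ∧
    Filter.Tendsto c0s Filter.atBot (nhds 0) ∧
    (∀ i, 1 ≤ i → i ≤ N → z i < 0 →
      Filter.Tendsto (fun φ : ℝ => (c0s φ) ^ (lam i / lam 0) * Real.exp (μbar i - z i * φ)) Filter.atBot (nhds 0)) := by
  -- extract a negative and a positive valence
  obtain ⟨i, j, hi1, hiN, hj1, hjN, hij⟩ := hmix
  have hneg : ∃ k, 1 ≤ k ∧ k ≤ N ∧ z k < 0 := by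
    rcases lt_or_gt_of_ne (hzne i hi1 hiN) with h | h
    · exact ⟨i, hi1, hiN, h⟩
    · refine ⟨j, hj1, hjN, ?_⟩
      nlinarith
  have hpos : ∃ k, 1 ≤ k ∧ k ≤ N ∧ 0 < z k := by
    rcases lt_or_gt_of_ne (hzne i hi1 hiN) with h | h
    · refine ⟨j, hj1, hjN, ?_⟩
      nlinarith
    · exact ⟨i, hi1, hiN, h⟩
  obtain ⟨hT1, hT2⟩ := key16 N z lam μbar μtilde0 hlam c0s hc0spos hc0seq hneg
  -- atBot part via φ ↦ -φ
  have hc0seq' : ∀ φ : ℝ, ∑ k ∈ Finset.range (N+1),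
      lam k * (c0s (-φ)) ^ (lam k / lam 0) * Real.exp (μbar k - (-z k) * φ) = μtilde0 := by
    intro φ
    rw [← hc0seq (-φ)]
    refine Finset.sum_congr rfl fun k _ => ?_
    congr 2
    ring
  have hneg' : ∃ k, 1 ≤ k ∧ k ≤ N ∧ (fun n => -z n) k < 0 := by
    obtain ⟨k, h1, h2, h3⟩ := hpos
    exact ⟨k, h1, h2, by simpa using h3⟩
  obtain ⟨hB1, hB2⟩ := key16 N (fun n => -z n) lam μbar μtilde0 hlam
    (fun φ => c0s (-φ)) (fun φ => hc0spos (-φ)) hc0seq' hneg'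
  have hB1' : Tendsto c0s atBot (nhds 0) := by
    have := hB1.comp tendsto_neg_atBot_atTop
    simpa [Function.comp_def] using this
  refine ⟨hT1, hT2, hB1', fun k h1 h2 h3 => ?_⟩
  have := (hB2 k h1 h2 (by simpa using h3)).comp tendsto_neg_atBot_atTop
  refine this.congr fun φ => ?_
  simp [Function.comp_def, neg_mul, mul_neg, neg_neg, sub_eq_add_neg]
end

section
/- For every Λ ≥ 1 and every φ ∈ ℝ, c_{0,Λ}(φ) ≤ max{ μ̃_0/λ_0 + μ̂_0/λ_0^2, 1 }. In particular, c_{0,Λ} is bounded on ℝ uniformly in Λ ≥ 1. -/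
open Filter Real Set

theorem stmt17
    (N : ℕ) (hN : 1 ≤ N)
    (z lam μhat : ℕ → ℝ) (μtilde0 : ℝ)
    (hz0 : z 0 = 0)
    (hzne : ∀ i, 1 ≤ i → i ≤ N → z i ≠ 0)
    (hmix : ∃ i j, 1 ≤ i ∧ i ≤ N ∧ 1 ≤ j ∧ j ≤ N ∧ z i * z j < 0)
    (hlam : ∀ i, i ≤ N → 0 < lam i)
    (hμt : 0 < μtilde0)
    (hμhat : ∀ i, i ≤ N → 0 < μhat i)
    (μbar : ℕ → ℝ) (hμbar : ∀ i, μbar i = μhat i - lam i / lam 0 * μhat 0)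
    (c0 : ℝ → ℝ → ℝ)
    (hc0pos : ∀ Λ : ℝ, 0 < Λ → ∀ φ, 0 < c0 Λ φ)
    (hc0eq : ∀ Λ : ℝ, 0 < Λ → ∀ φ : ℝ, Real.log (c0 Λ φ)
        + Λ * lam 0 * ∑ j ∈ Finset.range (N+1),
            lam j * (c0 Λ φ) ^ (lam j / lam 0) * Real.exp (μbar j - z j * φ)
      = Λ * lam 0 * μtilde0 + μhat 0)
    :
    (∀ Λ : ℝ, 1 ≤ Λ → ∀ φ : ℝ,
      c0 Λ φ ≤ max (μtilde0 / lam 0 + μhat 0 / (lam 0) ^ 2) 1) ∧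
    (∃ M : ℝ, ∀ Λ : ℝ, 1 ≤ Λ → ∀ φ : ℝ, c0 Λ φ ≤ M) := by
  have hlam0 : 0 < lam 0 := hlam 0 (Nat.zero_le N)
  have key : ∀ Λ : ℝ, 1 ≤ Λ → ∀ φ : ℝ,
      c0 Λ φ ≤ max (μtilde0 / lam 0 + μhat 0 / (lam 0) ^ 2) 1 := by
    intro Λ hΛ φ
    have hΛ0 : 0 < Λ := lt_of_lt_of_le one_pos hΛ
    have hc := hc0pos Λ hΛ0 φ
    by_cases hc1 : c0 Λ φ ≤ 1
    · exact le_max_of_le_right hc1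
    push_neg at hc1
    have hlog : 0 ≤ Real.log (c0 Λ φ) := Real.log_nonneg hc1.le
    -- bound the sum below by the 0-th term
    have hterm0 : lam 0 * (c0 Λ φ) ^ (lam 0 / lam 0) * Real.exp (μbar 0 - z 0 * φ)
        = lam 0 * c0 Λ φ := by
      rw [div_self hlam0.ne', Real.rpow_one, hμbar 0, div_self hlam0.ne', hz0]
      ring_nf
      rw [Real.exp_zero]
      ring
    have hsum : lam 0 * c0 Λ φ ≤ ∑ j ∈ Finset.range (N+1),
        lam j * (c0 Λ φ) ^ (lam j / lam 0) * Real.exp (μbar j - z j * φ) := by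
      rw [← hterm0]
      apply Finset.single_le_sum (f := fun j =>
        lam j * (c0 Λ φ) ^ (lam j / lam 0) * Real.exp (μbar j - z j * φ))
      · intro j hj
        have hjN : j ≤ N := Nat.lt_succ_iff.mp (Finset.mem_range.mp hj)
        have := hlam j hjN
        positivity
      · simp
    have heq := hc0eq Λ hΛ0 φ
    have h1 : Λ * lam 0 * (lam 0 * c0 Λ φ) ≤ Λ * lam 0 * μtilde0 + μhat 0 := by
      have h2 : Λ * lam 0 * (lam 0 * c0 Λ φ) ≤ Λ * lam 0 * ∑ j ∈ Finset.range (N+1),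
          lam j * (c0 Λ φ) ^ (lam j / lam 0) * Real.exp (μbar j - z j * φ) := by
        apply mul_le_mul_of_nonneg_left hsum (by positivity)
      linarith
    have h3 : Λ * lam 0 * μtilde0 + μhat 0 ≤ Λ * (lam 0 * μtilde0 + μhat 0) := by
      have := hμhat 0 (Nat.zero_le N)
      nlinarith
    have h4 : Λ * lam 0 ^ 2 * c0 Λ φ ≤ Λ * (lam 0 * μtilde0 + μhat 0) := by
      nlinarith
    have h5 : lam 0 ^ 2 * c0 Λ φ ≤ lam 0 * μtilde0 + μhat 0 := by
      have := mul_le_mul_of_nonneg_left h4 (le_of_lt (inv_pos.mpr hΛ0))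
      rw [inv_mul_cancel_left₀ hΛ0.ne', ← mul_assoc, ← mul_assoc,
        inv_mul_cancel₀ hΛ0.ne'] at this
      linarith
    have h6 : c0 Λ φ ≤ μtilde0 / lam 0 + μhat 0 / (lam 0) ^ 2 := by
      rw [div_add_div _ _ hlam0.ne' (by positivity : (lam 0 : ℝ)^2 ≠ 0),
        le_div_iff₀ (by positivity)]
      nlinarith
    exact le_max_of_le_left h6
  exact ⟨key, ⟨max (μtilde0 / lam 0 + μhat 0 / (lam 0) ^ 2) 1, key⟩⟩
end

section
/- For every Λ > 0 and every ρ_0 ∈ ℝ there exists a unique real number φ̂_Λ such that ρ_0 + f_Λ(φ̂_Λ) = 0. -/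
open Filter Real Set

open Topology

private lemma exp_diff_nonneg (x y : ℝ) : 0 ≤ (Real.exp y - Real.exp x) * (y - x) := by
  rcases le_total x y with h | h
  · exact mul_nonneg (sub_nonneg.mpr (Real.exp_le_exp.mpr h)) (by linarith)
  · exact mul_nonneg_iff.mpr (Or.inr ⟨sub_nonpos.mpr (Real.exp_le_exp.mpr h), by linarith⟩)

private lemma exp_diff_pos {x y : ℝ} (h : x ≠ y) : 0 < (Real.exp y - Real.exp x) * (y - x) := by
  rcases lt_or_gt_of_ne h with h | h
  · exact mul_pos (sub_pos.mpr (Real.exp_lt_exp.mpr h)) (sub_pos.mpr h)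
  · exact mul_pos_of_neg_of_neg (sub_neg.mpr (Real.exp_lt_exp.mpr h)) (sub_neg.mpr h)

private lemma aux_anti (n : ℕ) (z a b : ℕ → ℝ) (S μ0 : ℝ) (u : ℝ → ℝ)
    (hS : 0 < S)
    (heq : ∀ φ, u φ + S * ∑ j ∈ Finset.range n,
        a j * Real.exp (a j * u φ + b j - z j * φ) = μ0)
    (i : ℕ) (hi : i ∈ Finset.range n) (hzi : z i ≠ 0) :
    StrictAnti fun φ => ∑ j ∈ Finset.range n, z j * Real.exp (a j * u φ + b j - z j * φ) := by
  intro φ1 φ2 hlt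
  simp only
  have h1 := heq φ1
  have h2 := heq φ2
  have expand :
      ∑ j ∈ Finset.range n,
        (Real.exp (a j * u φ2 + b j - z j * φ2) - Real.exp (a j * u φ1 + b j - z j * φ1)) *
          ((a j * u φ2 + b j - z j * φ2) - (a j * u φ1 + b j - z j * φ1))
      = (u φ2 - u φ1) * ((∑ j ∈ Finset.range n, a j * Real.exp (a j * u φ2 + b j - z j * φ2))
            - ∑ j ∈ Finset.range n, a j * Real.exp (a j * u φ1 + b j - z j * φ1))
        - (φ2 - φ1) * ((∑ j ∈ Finset.range n, z j * Real.exp (a j * u φ2 + b j - z j * φ2))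
            - ∑ j ∈ Finset.range n, z j * Real.exp (a j * u φ1 + b j - z j * φ1)) := by
    rw [mul_sub, mul_sub, Finset.mul_sum, Finset.mul_sum, Finset.mul_sum, Finset.mul_sum,
      ← Finset.sum_sub_distrib, ← Finset.sum_sub_distrib, ← Finset.sum_sub_distrib]
    apply Finset.sum_congr rfl
    intro j _
    ring
  have key : (φ2 - φ1) * (S *
        ((∑ j ∈ Finset.range n, z j * Real.exp (a j * u φ1 + b j - z j * φ1))
          - ∑ j ∈ Finset.range n, z j * Real.exp (a j * u φ2 + b j - z j * φ2)))
      = (u φ2 - u φ1)^2 + S * ∑ j ∈ Finset.range n,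
        (Real.exp (a j * u φ2 + b j - z j * φ2) - Real.exp (a j * u φ1 + b j - z j * φ1)) *
          ((a j * u φ2 + b j - z j * φ2) - (a j * u φ1 + b j - z j * φ1)) := by
    rw [expand]
    linear_combination (u φ1 - u φ2) * h2 + (u φ2 - u φ1) * h1
  have hGnonneg : 0 ≤ ∑ j ∈ Finset.range n,
      (Real.exp (a j * u φ2 + b j - z j * φ2) - Real.exp (a j * u φ1 + b j - z j * φ1)) *
        ((a j * u φ2 + b j - z j * φ2) - (a j * u φ1 + b j - z j * φ1)) :=
    Finset.sum_nonneg fun j _ => exp_diff_nonneg _ _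
  have hQ : 0 < (u φ2 - u φ1)^2 + S * ∑ j ∈ Finset.range n,
      (Real.exp (a j * u φ2 + b j - z j * φ2) - Real.exp (a j * u φ1 + b j - z j * φ1)) *
        ((a j * u φ2 + b j - z j * φ2) - (a j * u φ1 + b j - z j * φ1)) := by
    rcases eq_or_ne (u φ2) (u φ1) with hD | hD
    · have hne : (a i * u φ1 + b i - z i * φ1) ≠ (a i * u φ2 + b i - z i * φ2) := by
        rw [hD]
        intro hcon
        have hzz : z i * φ1 = z i * φ2 := by linarith
        have := mul_left_cancel₀ hzi hzz
        linarith
      have hterm := exp_diff_pos hne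
      have hle : (Real.exp (a i * u φ2 + b i - z i * φ2) - Real.exp (a i * u φ1 + b i - z i * φ1)) *
            ((a i * u φ2 + b i - z i * φ2) - (a i * u φ1 + b i - z i * φ1))
          ≤ ∑ j ∈ Finset.range n,
            (Real.exp (a j * u φ2 + b j - z j * φ2) - Real.exp (a j * u φ1 + b j - z j * φ1)) *
              ((a j * u φ2 + b j - z j * φ2) - (a j * u φ1 + b j - z j * φ1)) :=
        Finset.single_le_sum (f := fun j =>
            (Real.exp (a j * u φ2 + b j - z j * φ2) - Real.exp (a j * u φ1 + b j - z j * φ1)) *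
              ((a j * u φ2 + b j - z j * φ2) - (a j * u φ1 + b j - z j * φ1)))
          (fun j _ => exp_diff_nonneg _ _) hi
      nlinarith [sq_nonneg (u φ2 - u φ1)]
    · have hd : u φ2 - u φ1 ≠ 0 := sub_ne_zero.mpr hD
      rcases lt_or_gt_of_ne hd with h | h
      · nlinarith [mul_nonneg hS.le hGnonneg]
      · nlinarith [mul_nonneg hS.le hGnonneg]
  have hΔ : 0 < φ2 - φ1 := sub_pos.mpr hlt
  nlinarith [key, hQ, mul_pos hΔ hS]

private lemma aux_cont (n : ℕ) (z a b : ℕ → ℝ) (S μ0 : ℝ) (u : ℝ → ℝ)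
    (hS : 0 < S) (ha : ∀ j ∈ Finset.range n, 0 ≤ a j)
    (heq : ∀ φ, u φ + S * ∑ j ∈ Finset.range n,
        a j * Real.exp (a j * u φ + b j - z j * φ) = μ0) :
    Continuous u := by
  rw [continuous_iff_continuousAt]
  intro φ0
  have hbound : ∀ φ, |u φ - u φ0| ≤
      |(u φ0 + S * ∑ j ∈ Finset.range n, a j * Real.exp (a j * u φ0 + b j - z j * φ)) - μ0| := by
    intro φ
    have hφ := heq φ
    rcases le_total (u φ) (u φ0) with h | h
    · rw [abs_of_nonpos (by linarith)]
      have hsum : ∑ j ∈ Finset.range n, a j * Real.exp (a j * u φ + b j - z j * φ)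
          ≤ ∑ j ∈ Finset.range n, a j * Real.exp (a j * u φ0 + b j - z j * φ) := by
        apply Finset.sum_le_sum
        intro j hj
        apply mul_le_mul_of_nonneg_left _ (ha j hj)
        apply Real.exp_le_exp.mpr
        have := mul_le_mul_of_nonneg_left h (ha j hj)
        linarith
      have hmul := mul_le_mul_of_nonneg_left hsum hS.le
      have : u φ0 - u φ ≤ (u φ0 + S * ∑ j ∈ Finset.range n,
          a j * Real.exp (a j * u φ0 + b j - z j * φ)) - μ0 := by linarith
      calc -(u φ - u φ0) = u φ0 - u φ := by ring
      _ ≤ _ := this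
      _ ≤ _ := le_abs_self _
    · rw [abs_of_nonneg (by linarith)]
      have hsum : ∑ j ∈ Finset.range n, a j * Real.exp (a j * u φ0 + b j - z j * φ)
          ≤ ∑ j ∈ Finset.range n, a j * Real.exp (a j * u φ + b j - z j * φ) := by
        apply Finset.sum_le_sum
        intro j hj
        apply mul_le_mul_of_nonneg_left _ (ha j hj)
        apply Real.exp_le_exp.mpr
        have := mul_le_mul_of_nonneg_left h (ha j hj)
        linarith
      have hmul := mul_le_mul_of_nonneg_left hsum hS.le
      have : u φ - u φ0 ≤ μ0 - (u φ0 + S * ∑ j ∈ Finset.range n,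
          a j * Real.exp (a j * u φ0 + b j - z j * φ)) := by linarith
      calc u φ - u φ0 ≤ _ := this
      _ ≤ |(u φ0 + S * ∑ j ∈ Finset.range n,
          a j * Real.exp (a j * u φ0 + b j - z j * φ)) - μ0| := by
        rw [abs_sub_comm]
        exact le_abs_self _
  have hc : Continuous fun φ => |(u φ0 + S * ∑ j ∈ Finset.range n,
      a j * Real.exp (a j * u φ0 + b j - z j * φ)) - μ0| := by
    apply Continuous.abs
    apply Continuous.sub _ continuous_const
    apply Continuous.add continuous_const
    apply Continuous.mul continuous_const
    apply continuous_finset_sum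
    intro j _
    exact continuous_const.mul
      (Real.continuous_exp.comp (continuous_const.sub (continuous_const.mul continuous_id)))
  have h0 : |(u φ0 + S * ∑ j ∈ Finset.range n,
      a j * Real.exp (a j * u φ0 + b j - z j * φ0)) - μ0| = 0 := by
    rw [heq φ0]; simp
  have hcont : Tendsto (fun φ => |(u φ0 + S * ∑ j ∈ Finset.range n,
      a j * Real.exp (a j * u φ0 + b j - z j * φ)) - μ0|) (𝓝 φ0) (𝓝 0) := by
    have := hc.tendsto φ0
    rwa [h0] at this
  have hT : Tendsto (fun φ => |u φ - u φ0|) (𝓝 φ0) (𝓝 0) :=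
    squeeze_zero (fun t => abs_nonneg _) hbound hcont
  rw [ContinuousAt, tendsto_iff_dist_tendsto_zero]
  simpa [Real.dist_eq] using hT

private lemma aux_below (n : ℕ) (z a b : ℕ → ℝ) (S μ0 : ℝ) (u : ℝ → ℝ)
    (hS : 0 < S) (ha : ∀ j ∈ Finset.range n, 0 < a j)
    (heq : ∀ φ, u φ + S * ∑ j ∈ Finset.range n,
        a j * Real.exp (a j * u φ + b j - z j * φ) = μ0)
    (i : ℕ) (hi : i ∈ Finset.range n) (hzi : z i < 0) (C : ℝ) :
    ∃ φ, ∑ j ∈ Finset.range n, z j * Real.exp (a j * u φ + b j - z j * φ) < C := by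
  have hub : ∀ φ, u φ ≤ μ0 := by
    intro φ
    have h := heq φ
    have hsum : 0 ≤ ∑ j ∈ Finset.range n, a j * Real.exp (a j * u φ + b j - z j * φ) :=
      Finset.sum_nonneg fun j hj => mul_nonneg (ha j hj).le (Real.exp_nonneg _)
    nlinarith [mul_nonneg hS.le hsum]
  set s := (Finset.range n).filter (fun j => z j < 0) with hs
  have his : i ∈ s := Finset.mem_filter.mpr ⟨hi, hzi⟩
  have hsne : s.Nonempty := ⟨i, his⟩
  set m := s.inf' hsne (fun j => -z j) with hm
  have hmpos : 0 < m := by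
    rw [hm, Finset.lt_inf'_iff]
    intro j hj
    have := (Finset.mem_filter.mp hj).2
    linarith
  have hmle : ∀ j ∈ s, z j ≤ -m := by
    intro j hj
    have := Finset.inf'_le (f := fun j => -z j) hj
    rw [← hm] at this
    linarith
  set amax := s.sup' hsne a with hamax
  have hamaxpos : 0 < amax := lt_of_lt_of_le (ha i hi) (Finset.le_sup' a his)
  set Cp := ∑ j ∈ Finset.range n, |z j| * Real.exp (a j * μ0 + b j) with hCp
  set Ca0 := ∑ j ∈ Finset.range n, a j * Real.exp (a j * μ0 + b j) with hCa0
  set M := max ((Cp - C)/m + 1) 1 with hM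
  have hMpos : (0:ℝ) < M := lt_of_lt_of_le one_pos (le_max_right _ _)
  have hmM : Cp - C + m ≤ m * M := by
    have h1 : (Cp - C)/m + 1 ≤ M := le_max_left _ _
    have h2 := mul_le_mul_of_nonneg_left h1 hmpos.le
    have h3 : m * ((Cp - C)/m + 1) = Cp - C + m := by field_simp
    linarith
  set ustar := μ0 - S * Ca0 - S * amax * M with hustar
  set φ1 := max 0 ((Real.log M - (a i * ustar + b i)) / (-z i)) with hφ1
  refine ⟨φ1, ?_⟩
  have hφ1nonneg : 0 ≤ φ1 := le_max_left _ _
  have hexpbound : ∀ j ∈ Finset.range n, ¬ z j < 0 →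
      Real.exp (a j * u φ1 + b j - z j * φ1) ≤ Real.exp (a j * μ0 + b j) := by
    intro j hj hjz
    push_neg at hjz
    apply Real.exp_le_exp.mpr
    have h1 : a j * u φ1 ≤ a j * μ0 := mul_le_mul_of_nonneg_left (hub φ1) (ha j hj).le
    have h2 : 0 ≤ z j * φ1 := mul_nonneg hjz hφ1nonneg
    linarith
  have hW : M ≤ ∑ j ∈ s, Real.exp (a j * u φ1 + b j - z j * φ1) := by
    by_contra hW'
    push_neg at hW'
    have husm : ustar ≤ u φ1 := by
      have h := heq φ1
      have hsplit := Finset.sum_filter_add_sum_filter_not (Finset.range n) (fun j => z j < 0)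
        (fun j => a j * Real.exp (a j * u φ1 + b j - z j * φ1))
      have hb1 : ∑ j ∈ s, a j * Real.exp (a j * u φ1 + b j - z j * φ1) ≤ amax * M := by
        calc ∑ j ∈ s, a j * Real.exp (a j * u φ1 + b j - z j * φ1)
            ≤ ∑ j ∈ s, amax * Real.exp (a j * u φ1 + b j - z j * φ1) :=
              Finset.sum_le_sum fun j hj =>
                mul_le_mul_of_nonneg_right (Finset.le_sup' a hj) (Real.exp_nonneg _)
        _ = amax * ∑ j ∈ s, Real.exp (a j * u φ1 + b j - z j * φ1) := (Finset.mul_sum _ _ _).symm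
        _ ≤ amax * M := mul_le_mul_of_nonneg_left hW'.le hamaxpos.le
      have hb2 : ∑ j ∈ (Finset.range n).filter (fun j => ¬ z j < 0),
          a j * Real.exp (a j * u φ1 + b j - z j * φ1) ≤ Ca0 := by
        calc ∑ j ∈ (Finset.range n).filter (fun j => ¬ z j < 0),
            a j * Real.exp (a j * u φ1 + b j - z j * φ1)
            ≤ ∑ j ∈ (Finset.range n).filter (fun j => ¬ z j < 0),
              a j * Real.exp (a j * μ0 + b j) := by
              apply Finset.sum_le_sum
              intro j hj
              have hjr := Finset.mem_filter.mp hj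
              exact mul_le_mul_of_nonneg_left (hexpbound j hjr.1 hjr.2) (ha j hjr.1).le
        _ ≤ Ca0 := by
              rw [hCa0]
              exact Finset.sum_le_sum_of_subset_of_nonneg (Finset.filter_subset _ _)
                fun j hj _ => mul_nonneg (ha j hj).le (Real.exp_nonneg _)
      have htot : ∑ j ∈ Finset.range n, a j * Real.exp (a j * u φ1 + b j - z j * φ1)
          ≤ amax * M + Ca0 := by
        rw [← hsplit]
        have : s = (Finset.range n).filter (fun j => z j < 0) := hs
        rw [← this] at *
        linarith [hb1, hb2]
      have hmul := mul_le_mul_of_nonneg_left htot hS.le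
      rw [hustar]
      nlinarith [hmul, h]
    have hEi : M ≤ Real.exp (a i * u φ1 + b i - z i * φ1) := by
      have hφge : (Real.log M - (a i * ustar + b i)) / (-z i) ≤ φ1 := le_max_right _ _
      have hz : 0 < -z i := by linarith
      rw [div_le_iff₀ hz] at hφge
      have h2 : φ1 * -z i = -(z i * φ1) := by ring
      have h3 : a i * ustar ≤ a i * u φ1 := mul_le_mul_of_nonneg_left husm (ha i hi).le
      have hexp : Real.log M ≤ a i * u φ1 + b i - z i * φ1 := by linarith
      calc M = Real.exp (Real.log M) := (Real.exp_log hMpos).symm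
      _ ≤ _ := Real.exp_le_exp.mpr hexp
    have hle : Real.exp (a i * u φ1 + b i - z i * φ1)
        ≤ ∑ j ∈ s, Real.exp (a j * u φ1 + b j - z j * φ1) :=
      Finset.single_le_sum (f := fun j => Real.exp (a j * u φ1 + b j - z j * φ1))
        (fun j _ => Real.exp_nonneg _) his
    linarith
  have hsplit := Finset.sum_filter_add_sum_filter_not (Finset.range n) (fun j => z j < 0)
    (fun j => z j * Real.exp (a j * u φ1 + b j - z j * φ1))
  have hneg : ∑ j ∈ s, z j * Real.exp (a j * u φ1 + b j - z j * φ1) ≤ -(m * M) := by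
    calc ∑ j ∈ s, z j * Real.exp (a j * u φ1 + b j - z j * φ1)
        ≤ ∑ j ∈ s, (-m) * Real.exp (a j * u φ1 + b j - z j * φ1) :=
          Finset.sum_le_sum fun j hj =>
            mul_le_mul_of_nonneg_right (hmle j hj) (Real.exp_nonneg _)
    _ = (-m) * ∑ j ∈ s, Real.exp (a j * u φ1 + b j - z j * φ1) := (Finset.mul_sum _ _ _).symm
    _ ≤ -(m * M) := by nlinarith [hW, hmpos]
  have hpos : ∑ j ∈ (Finset.range n).filter (fun j => ¬ z j < 0),
      z j * Real.exp (a j * u φ1 + b j - z j * φ1) ≤ Cp := by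
    calc ∑ j ∈ (Finset.range n).filter (fun j => ¬ z j < 0),
        z j * Real.exp (a j * u φ1 + b j - z j * φ1)
        ≤ ∑ j ∈ (Finset.range n).filter (fun j => ¬ z j < 0),
          |z j| * Real.exp (a j * μ0 + b j) := by
          apply Finset.sum_le_sum
          intro j hj
          have hjr := Finset.mem_filter.mp hj
          have h0 : 0 ≤ z j := not_lt.mp hjr.2
          calc z j * Real.exp (a j * u φ1 + b j - z j * φ1)
              ≤ z j * Real.exp (a j * μ0 + b j) :=
                mul_le_mul_of_nonneg_left (hexpbound j hjr.1 hjr.2) h0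
          _ ≤ |z j| * Real.exp (a j * μ0 + b j) :=
                mul_le_mul_of_nonneg_right (le_abs_self _) (Real.exp_nonneg _)
    _ ≤ Cp := by
          rw [hCp]
          exact Finset.sum_le_sum_of_subset_of_nonneg (Finset.filter_subset _ _)
            fun j _ _ => mul_nonneg (abs_nonneg _) (Real.exp_nonneg _)
  have hss : ∑ j ∈ s, z j * Real.exp (a j * u φ1 + b j - z j * φ1)
      + ∑ j ∈ (Finset.range n).filter (fun j => ¬ z j < 0),
        z j * Real.exp (a j * u φ1 + b j - z j * φ1)
      = ∑ j ∈ Finset.range n, z j * Real.exp (a j * u φ1 + b j - z j * φ1) := by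
    rw [hs]; exact hsplit
  linarith [hneg, hpos, hmM, hmpos]

theorem stmt18
    (N : ℕ) (hN : 1 ≤ N)
    (z lam μhat : ℕ → ℝ) (μtilde0 : ℝ)
    (hz0 : z 0 = 0)
    (hzne : ∀ i, 1 ≤ i → i ≤ N → z i ≠ 0)
    (hmix : ∃ i j, 1 ≤ i ∧ i ≤ N ∧ 1 ≤ j ∧ j ≤ N ∧ z i * z j < 0)
    (hlam : ∀ i, i ≤ N → 0 < lam i)
    (hμt : 0 < μtilde0)
    (hμhat : ∀ i, i ≤ N → 0 < μhat i)
    (μbar : ℕ → ℝ) (hμbar : ∀ i, μbar i = μhat i - lam i / lam 0 * μhat 0)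
    (Λ : ℝ) (hΛ : 0 < Λ)
    (c0 : ℝ → ℝ) (hc0pos : ∀ φ, 0 < c0 φ)
    (hc0eq : ∀ φ : ℝ, Real.log (c0 φ)
        + Λ * lam 0 * ∑ j ∈ Finset.range (N+1),
            lam j * (c0 φ) ^ (lam j / lam 0) * Real.exp (μbar j - z j * φ)
      = Λ * lam 0 * μtilde0 + μhat 0)
    :
    ∀ ρ₀ : ℝ, ∃! φ : ℝ, ρ₀ + (∑ i ∈ Finset.Icc 1 N, z i * ((c0 φ) ^ (lam i / lam 0) * Real.exp (μbar i - z i * φ))) = 0 := by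
  intro ρ₀
  have hl0 : 0 < lam 0 := hlam 0 (Nat.zero_le N)
  have hS : 0 < Λ * (lam 0 * lam 0) := mul_pos hΛ (mul_pos hl0 hl0)
  have ha : ∀ j ∈ Finset.range (N+1), 0 < lam j / lam 0 := fun j hj =>
    div_pos (hlam j (Nat.lt_succ_iff.mp (Finset.mem_range.mp hj))) hl0
  -- the equation in exponential form
  have heq : ∀ φ, Real.log (c0 φ) + (Λ * (lam 0 * lam 0)) * ∑ j ∈ Finset.range (N+1),
      (lam j / lam 0) * Real.exp ((lam j / lam 0) * Real.log (c0 φ) + μbar j - z j * φ)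
      = Λ * lam 0 * μtilde0 + μhat 0 := by
    intro φ
    have h := hc0eq φ
    have hsum : ∑ j ∈ Finset.range (N+1),
        lam j * (c0 φ) ^ (lam j / lam 0) * Real.exp (μbar j - z j * φ)
        = lam 0 * ∑ j ∈ Finset.range (N+1),
          (lam j / lam 0) * Real.exp ((lam j / lam 0) * Real.log (c0 φ) + μbar j - z j * φ) := by
      rw [Finset.mul_sum]
      apply Finset.sum_congr rfl
      intro j _
      rw [Real.rpow_def_of_pos (hc0pos φ)]
      rw [show (lam j / lam 0) * Real.log (c0 φ) + μbar j - z j * φ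
          = Real.log (c0 φ) * (lam j / lam 0) + (μbar j - z j * φ) from by ring]
      rw [Real.exp_add]
      field_simp
    rw [hsum] at h
    linarith [h]
  -- positive and negative valence indices
  obtain ⟨i0, j0, hi1, hiN, hj1, hjN, hzz⟩ := hmix
  have hpq : ∃ p q, p ≤ N ∧ q ≤ N ∧ 0 < z p ∧ z q < 0 := by
    rcases lt_trichotomy (z i0) 0 with h | h | h
    · refine ⟨j0, i0, hjN, hiN, ?_, h⟩
      rcases lt_trichotomy (z j0) 0 with h2 | h2 | h2
      · nlinarith
      · rw [h2] at hzz; nlinarith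
      · exact h2
    · rw [h] at hzz; nlinarith
    · refine ⟨i0, j0, hiN, hjN, h, ?_⟩
      rcases lt_trichotomy (z j0) 0 with h2 | h2 | h2
      · exact h2
      · rw [h2] at hzz; nlinarith
      · nlinarith
  obtain ⟨p, q, hpN, hqN, hzp, hzq⟩ := hpq
  have hpmem : p ∈ Finset.range (N+1) := Finset.mem_range.mpr (Nat.lt_succ_iff.mpr hpN)
  have hqmem : q ∈ Finset.range (N+1) := Finset.mem_range.mpr (Nat.lt_succ_iff.mpr hqN)
  -- main function
  set F : ℝ → ℝ := fun φ => ∑ j ∈ Finset.range (N+1),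
      z j * Real.exp ((lam j / lam 0) * Real.log (c0 φ) + μbar j - z j * φ) with hF
  have hanti : StrictAnti F :=
    aux_anti (N+1) z (fun j => lam j / lam 0) μbar (Λ * (lam 0 * lam 0))
      (Λ * lam 0 * μtilde0 + μhat 0) (fun φ => Real.log (c0 φ)) hS heq p hpmem (ne_of_gt hzp)
  have hucont : Continuous fun φ => Real.log (c0 φ) :=
    aux_cont (N+1) z (fun j => lam j / lam 0) μbar (Λ * (lam 0 * lam 0))
      (Λ * lam 0 * μtilde0 + μhat 0) (fun φ => Real.log (c0 φ)) hS
      (fun j hj => (ha j hj).le) heq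
  have hFcont : Continuous F := by
    rw [hF]
    apply continuous_finset_sum
    intro j _
    exact continuous_const.mul
      (Real.continuous_exp.comp
        (((continuous_const.mul hucont).add continuous_const).sub (continuous_const.mul continuous_id)))
  -- representation of the statement's sum
  have hrepr : ∀ φ, (∑ i ∈ Finset.Icc 1 N,
      z i * ((c0 φ) ^ (lam i / lam 0) * Real.exp (μbar i - z i * φ))) = F φ := by
    intro φ
    rw [hF]
    calc ∑ i ∈ Finset.Icc 1 N, z i * ((c0 φ) ^ (lam i / lam 0) * Real.exp (μbar i - z i * φ))
        = ∑ j ∈ Finset.range (N+1),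
          z j * ((c0 φ) ^ (lam j / lam 0) * Real.exp (μbar j - z j * φ)) := by
          apply Finset.sum_subset
          · intro x hx
            rw [Finset.mem_Icc] at hx
            exact Finset.mem_range.mpr (by omega)
          · intro x hx hnx
            rw [Finset.mem_range] at hx
            rw [Finset.mem_Icc] at hnx
            have : x = 0 := by omega
            rw [this, hz0, zero_mul]
    _ = ∑ j ∈ Finset.range (N+1),
          z j * Real.exp ((lam j / lam 0) * Real.log (c0 φ) + μbar j - z j * φ) := by
          apply Finset.sum_congr rfl
          intro j _
          rw [Real.rpow_def_of_pos (hc0pos φ), ← Real.exp_add,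
            show Real.log (c0 φ) * (lam j / lam 0) + (μbar j - z j * φ)
              = (lam j / lam 0) * Real.log (c0 φ) + μbar j - z j * φ from by ring]
  -- F takes values below -ρ₀
  have hneg : ∃ φ, F φ < -ρ₀ := by
    obtain ⟨φ, hφ⟩ := aux_below (N+1) z (fun j => lam j / lam 0) μbar (Λ * (lam 0 * lam 0))
      (Λ * lam 0 * μtilde0 + μhat 0) (fun φ => Real.log (c0 φ)) hS ha heq q hqmem hzq (-ρ₀)
    exact ⟨φ, hφ⟩
  -- F takes values above -ρ₀ (apply aux_below to the reflected system)
  have hpos : ∃ φ, -ρ₀ < F φ := by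
    have heqneg : ∀ φ, Real.log (c0 (-φ)) + (Λ * (lam 0 * lam 0)) * ∑ j ∈ Finset.range (N+1),
        (lam j / lam 0) * Real.exp ((lam j / lam 0) * Real.log (c0 (-φ)) + μbar j - (-z j) * φ)
        = Λ * lam 0 * μtilde0 + μhat 0 := by
      intro φ
      have h := heq (-φ)
      have hcongr : ∑ j ∈ Finset.range (N+1),
          (lam j / lam 0) * Real.exp ((lam j / lam 0) * Real.log (c0 (-φ)) + μbar j - (-z j) * φ)
          = ∑ j ∈ Finset.range (N+1),
          (lam j / lam 0) * Real.exp ((lam j / lam 0) * Real.log (c0 (-φ)) + μbar j - z j * (-φ)) := by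
        apply Finset.sum_congr rfl
        intro j _
        rw [show (lam j / lam 0) * Real.log (c0 (-φ)) + μbar j - (-z j) * φ
            = (lam j / lam 0) * Real.log (c0 (-φ)) + μbar j - z j * (-φ) from by ring]
      rw [hcongr]
      exact h
    obtain ⟨φ, hφ⟩ := aux_below (N+1) (fun j => -z j) (fun j => lam j / lam 0) μbar
      (Λ * (lam 0 * lam 0)) (Λ * lam 0 * μtilde0 + μhat 0)
      (fun φ => Real.log (c0 (-φ))) hS ha heqneg p hpmem (by simpa using hzp) ρ₀
    refine ⟨-φ, ?_⟩
    have hconv : ∑ j ∈ Finset.range (N+1),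
        (-z j) * Real.exp ((lam j / lam 0) * Real.log (c0 (-φ)) + μbar j - (-z j) * φ)
        = -F (-φ) := by
      rw [hF, ← Finset.sum_neg_distrib]
      apply Finset.sum_congr rfl
      intro j _
      rw [show (lam j / lam 0) * Real.log (c0 (-φ)) + μbar j - (-z j) * φ
          = (lam j / lam 0) * Real.log (c0 (-φ)) + μbar j - z j * (-φ) from by ring]
      ring
    rw [hconv] at hφ
    linarith
  obtain ⟨φa, hφa⟩ := hpos
  obtain ⟨φb, hφb⟩ := hneg
  have horder : φa < φb := by
    by_contra hcon
    push_neg at hcon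
    have := hanti.antitone hcon
    linarith
  have hg : ContinuousOn (fun φ => ρ₀ + F φ) (Set.Icc φa φb) :=
    (continuous_const.add hFcont).continuousOn
  have h0mem : (0:ℝ) ∈ Set.Icc ((fun φ => ρ₀ + F φ) φb) ((fun φ => ρ₀ + F φ) φa) :=
    ⟨by simp only; linarith, by simp only; linarith⟩
  obtain ⟨φ, hφmem, hφeq⟩ := intermediate_value_Icc' horder.le hg h0mem
  refine ⟨φ, ?_, ?_⟩
  · show ρ₀ + (∑ i ∈ Finset.Icc 1 N, z i * ((c0 φ) ^ (lam i / lam 0) * Real.exp (μbar i - z i * φ))) = 0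
    rw [hrepr φ]
    exact hφeq
  · intro y hy
    have hy' : ρ₀ + F y = 0 := by rw [← hrepr y]; exact hy
    have hφ0 : ρ₀ + F φ = 0 := hφeq
    exact hanti.injective (by linarith : F y = F φ)
end

section
/- Let m^* = lim_{φ → +∞} f^*(φ) and M^* = lim_{φ → −∞} f^*(φ), and suppose ρ_0 ∈ (−M^*, −m^*). Then there exists a unique real number φ^* with ρ_0 + f^*(φ^*) = 0, and the unique real numbers φ̂_Λ satisfying ρ_0 + f_Λ(φ̂_Λ) = 0 converge to φ^* as Λ → ∞. -/
open Filter Real Set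

private lemma exp_sub_mul_sub_nonneg (u v : ℝ) :
    0 ≤ (Real.exp v - Real.exp u) * (v - u) := by
  rcases le_total u v with h | h
  · exact mul_nonneg (sub_nonneg.2 (Real.exp_le_exp.2 h)) (sub_nonneg.2 h)
  · have h1 : Real.exp v - Real.exp u ≤ 0 := sub_nonpos.2 (Real.exp_le_exp.2 h)
    have h2 : v - u ≤ 0 := sub_nonpos.2 h
    nlinarith

private lemma exp_sub_mul_sub_eq_zero {u v : ℝ}
    (h : (Real.exp v - Real.exp u) * (v - u) = 0) : u = v := by
  rcases mul_eq_zero.1 h with h' | h'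
  · exact (Real.exp_injective (sub_eq_zero.1 h')).symm
  · linarith [sub_eq_zero.1 h']

theorem stmt19
    (N : ℕ) (hN : 1 ≤ N)
    (z lam μhat : ℕ → ℝ) (μtilde0 : ℝ)
    (hz0 : z 0 = 0)
    (hzne : ∀ i, 1 ≤ i → i ≤ N → z i ≠ 0)
    (hmix : ∃ i j, 1 ≤ i ∧ i ≤ N ∧ 1 ≤ j ∧ j ≤ N ∧ z i * z j < 0)
    (hlam : ∀ i, i ≤ N → 0 < lam i)
    (hμt : 0 < μtilde0)
    (hμhat : ∀ i, i ≤ N → 0 < μhat i)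
    (μbar : ℕ → ℝ) (hμbar : ∀ i, μbar i = μhat i - lam i / lam 0 * μhat 0)
    (c0 : ℝ → ℝ → ℝ)
    (hc0pos : ∀ Λ : ℝ, 0 < Λ → ∀ φ, 0 < c0 Λ φ)
    (hc0eq : ∀ Λ : ℝ, 0 < Λ → ∀ φ : ℝ, Real.log (c0 Λ φ)
        + Λ * lam 0 * ∑ j ∈ Finset.range (N+1),
            lam j * (c0 Λ φ) ^ (lam j / lam 0) * Real.exp (μbar j - z j * φ)
      = Λ * lam 0 * μtilde0 + μhat 0)
    (c0s : ℝ → ℝ) (hc0spos : ∀ φ, 0 < c0s φ)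
    (hc0seq : ∀ φ : ℝ, ∑ j ∈ Finset.range (N+1),
        lam j * (c0s φ) ^ (lam j / lam 0) * Real.exp (μbar j - z j * φ) = μtilde0)
    (mstar Mstar : ℝ)
    (hm : Filter.Tendsto (fun φ : ℝ => ∑ i ∈ Finset.Icc 1 N, z i * ((c0s φ) ^ (lam i / lam 0) * Real.exp (μbar i - z i * φ))) Filter.atTop (nhds mstar))
    (hM : Filter.Tendsto (fun φ : ℝ => ∑ i ∈ Finset.Icc 1 N, z i * ((c0s φ) ^ (lam i / lam 0) * Real.exp (μbar i - z i * φ))) Filter.atBot (nhds Mstar))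
    (ρ₀ : ℝ) (hρ : -Mstar < ρ₀ ∧ ρ₀ < -mstar) :
    (∃! φs : ℝ, ρ₀ + (∑ i ∈ Finset.Icc 1 N, z i * ((c0s φs) ^ (lam i / lam 0) * Real.exp (μbar i - z i * φs))) = 0) ∧
    (∀ φs : ℝ, ρ₀ + (∑ i ∈ Finset.Icc 1 N, z i * ((c0s φs) ^ (lam i / lam 0) * Real.exp (μbar i - z i * φs))) = 0 →
      ∀ φhat : ℝ → ℝ,
        (∀ Λ : ℝ, 0 < Λ → ρ₀ + (∑ i ∈ Finset.Icc 1 N, z i * (((c0 Λ) (φhat Λ)) ^ (lam i / lam 0) * Real.exp (μbar i - z i * (φhat Λ)))) = 0) →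
        Filter.Tendsto φhat Filter.atTop (nhds φs)) := by
  obtain ⟨hρ1, hρ2⟩ := hρ
  have hlam0 : 0 < lam 0 := hlam 0 (Nat.zero_le N)
  set a : ℕ → ℝ := fun j => lam j / lam 0 with ha_def
  have ha0 : a 0 = 1 := div_self hlam0.ne'
  have hapos : ∀ j, j ≤ N → 0 < a j := fun j hj => div_pos (hlam j hj) hlam0
  have hla : ∀ j, lam 0 * a j = lam j := fun j => mul_div_cancel₀ _ hlam0.ne'
  set u : ℝ → ℝ → ℕ → ℝ := fun c φ j => a j * Real.log c + (μbar j - z j * φ) with hu_def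
  have hterm : ∀ {c : ℝ}, 0 < c → ∀ (φ : ℝ) (j : ℕ),
      c ^ (lam j / lam 0) * Real.exp (μbar j - z j * φ) = Real.exp (u c φ j) := by
    intro c hc φ j
    rw [Real.rpow_def_of_pos hc, ← Real.exp_add]
    congr 1
    simp only [hu_def]
    ring
  set S : ℝ → ℝ → ℝ := fun c φ => ∑ j ∈ Finset.range (N+1), lam j * Real.exp (u c φ j) with hS_def
  set Ff : ℝ → ℝ → ℝ := fun c φ => ∑ j ∈ Finset.range (N+1), z j * Real.exp (u c φ j) with hFf_def
  set F : ℝ → ℝ → ℝ := fun c φ => ∑ j ∈ Finset.Icc 1 N, z j * Real.exp (u c φ j) with hF_def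
  have hset : Finset.range (N+1) = insert 0 (Finset.Icc 1 N) := by
    ext x; simp only [Finset.mem_range, Finset.mem_insert, Finset.mem_Icc]; omega
  have hFfF : ∀ c φ, Ff c φ = F c φ := by
    intro c φ
    simp only [hFf_def, hF_def, hset]
    rw [Finset.sum_insert (by simp)]
    rw [hz0]; ring
  have hfstar : ∀ φ, (∑ i ∈ Finset.Icc 1 N, z i * ((c0s φ) ^ (lam i / lam 0) * Real.exp (μbar i - z i * φ))) = F (c0s φ) φ := by
    intro φ
    apply Finset.sum_congr rfl
    intro i _
    rw [hterm (hc0spos φ)]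
  have hS_c0s : ∀ φ, S (c0s φ) φ = μtilde0 := by
    intro φ
    rw [← hc0seq φ]
    apply Finset.sum_congr rfl
    intro j _
    rw [mul_assoc, hterm (hc0spos φ)]
  have hS_c0 : ∀ Λ : ℝ, 0 < Λ → ∀ φ, Real.log (c0 Λ φ) + Λ * lam 0 * S (c0 Λ φ) φ
      = Λ * lam 0 * μtilde0 + μhat 0 := by
    intro Λ hΛ φ
    rw [← hc0eq Λ hΛ φ]
    congr 1
    congr 1
    apply Finset.sum_congr rfl
    intro j _
    rw [mul_assoc, hterm (hc0pos Λ hΛ φ)]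
  -- key algebraic expansion
  have expand : ∀ c1 c2 φ1 φ2 : ℝ,
      (Real.log c2 - Real.log c1) * (S c2 φ2 - S c1 φ1)
        - (φ2 - φ1) * lam 0 * (Ff c2 φ2 - Ff c1 φ1)
      = ∑ j ∈ Finset.range (N+1),
          lam 0 * ((Real.exp (u c2 φ2 j) - Real.exp (u c1 φ1 j)) * (u c2 φ2 j - u c1 φ1 j)) := by
    intro c1 c2 φ1 φ2
    simp only [hS_def, hFf_def]
    rw [← Finset.sum_sub_distrib, ← Finset.sum_sub_distrib, Finset.mul_sum, Finset.mul_sum,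
      ← Finset.sum_sub_distrib]
    apply Finset.sum_congr rfl
    intro j _
    have h := hla j
    simp only [hu_def]
    rw [← h]
    ring
  have key : ∀ c1 c2 φ1 φ2 : ℝ,
      0 ≤ (Real.log c2 - Real.log c1) * (S c2 φ2 - S c1 φ1)
        - (φ2 - φ1) * lam 0 * (Ff c2 φ2 - Ff c1 φ1) := by
    intro c1 c2 φ1 φ2
    rw [expand]
    exact Finset.sum_nonneg fun j _ => mul_nonneg hlam0.le (exp_sub_mul_sub_nonneg _ _)
  -- S strictly monotone in c on positives
  have hSmono : ∀ (φ : ℝ) {c1 c2 : ℝ}, 0 < c1 → c1 < c2 → S c1 φ < S c2 φ := by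
    intro φ c1 c2 hc1 h12
    simp only [hS_def]
    apply Finset.sum_lt_sum_of_nonempty ⟨0, by simp⟩
    intro j hj
    have hjN : j ≤ N := by simpa [Nat.lt_succ_iff] using Finset.mem_range.1 hj
    have hu12 : u c1 φ j < u c2 φ j := by
      simp only [hu_def]
      have h1 := Real.log_lt_log hc1 h12
      have h2 := hapos j hjN
      nlinarith
    exact mul_lt_mul_of_pos_left (Real.exp_lt_exp.2 hu12) (hlam j hjN)
  have hSle : ∀ (φ : ℝ) {c1 c2 : ℝ}, 0 < c1 → c1 ≤ c2 → S c1 φ ≤ S c2 φ := by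
    intro φ c1 c2 hc1 h12
    rcases eq_or_lt_of_le h12 with rfl | h
    · exact le_refl _
    · exact (hSmono φ hc1 h).le
  have hScont : ∀ c : ℝ, Continuous (fun φ => S c φ) := by
    intro c
    simp only [hS_def]
    apply continuous_finset_sum
    intro j _
    apply continuous_const.mul
    apply Real.continuous_exp.comp
    simp only [hu_def]
    fun_prop
  -- strict antitonicity of the limiting charge function
  have hanti_star : ∀ φ1 φ2 : ℝ, φ1 < φ2 → F (c0s φ2) φ2 < F (c0s φ1) φ1 := by
    intro φ1 φ2 h12
    have hk := key (c0s φ1) (c0s φ2) φ1 φ2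
    rw [hS_c0s, hS_c0s, sub_self, mul_zero, hFfF, hFfF] at hk
    have hle : F (c0s φ2) φ2 ≤ F (c0s φ1) φ1 := by
      nlinarith [mul_pos (sub_pos.2 h12) hlam0]
    rcases lt_or_eq_of_le hle with h | h
    · exact h
    exfalso
    have hzero : (Real.log (c0s φ2) - Real.log (c0s φ1)) * (S (c0s φ2) φ2 - S (c0s φ1) φ1)
        - (φ2 - φ1) * lam 0 * (Ff (c0s φ2) φ2 - Ff (c0s φ1) φ1) = 0 := by
      rw [hS_c0s, hS_c0s, hFfF, hFfF, h]; ring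
    rw [expand] at hzero
    have hall := (Finset.sum_eq_zero_iff_of_nonneg
      (fun j _ => mul_nonneg hlam0.le (exp_sub_mul_sub_nonneg _ _))).1 hzero
    have huu : ∀ j ∈ Finset.range (N+1), u (c0s φ1) φ1 j = u (c0s φ2) φ2 j := by
      intro j hj
      have hj' := hall j hj
      have h2 : (Real.exp (u (c0s φ2) φ2 j) - Real.exp (u (c0s φ1) φ1 j))
          * (u (c0s φ2) φ2 j - u (c0s φ1) φ1 j) = 0 := by
        rcases mul_eq_zero.1 hj' with h' | h'
        · exact absurd h' hlam0.ne'
        · exact h'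
      exact exp_sub_mul_sub_eq_zero h2
    have h0 := huu 0 (by simp)
    simp only [hu_def, ha0, hz0, one_mul, zero_mul, sub_zero] at h0
    have hlogeq : Real.log (c0s φ1) = Real.log (c0s φ2) := by linarith
    obtain ⟨i, j', hi1, hiN, _, _, hzz⟩ := hmix
    have hi := huu i (Finset.mem_range.2 (by omega))
    simp only [hu_def] at hi
    rw [hlogeq] at hi
    have hzi : z i ≠ 0 := hzne i hi1 hiN
    have hzeq : z i * φ1 = z i * φ2 := by linarith
    have := mul_left_cancel₀ hzi hzeq
    linarith
  -- continuity of c0s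
  have hc0s_cont : Continuous c0s := by
    rw [continuous_iff_continuousAt]
    intro φ0
    have hc := hc0spos φ0
    rw [ContinuousAt, Metric.tendsto_nhds]
    intro ε hε
    set ε' := min ε (c0s φ0 / 2) with hε'_def
    have hε' : 0 < ε' := lt_min hε (by linarith)
    have hε'le : ε' ≤ ε := min_le_left _ _
    have hε'half : ε' ≤ c0s φ0 / 2 := min_le_right _ _
    have hpos1 : 0 < c0s φ0 - ε' := by linarith
    have hlow : S (c0s φ0 - ε') φ0 < μtilde0 := by
      rw [← hS_c0s φ0]; exact hSmono φ0 hpos1 (by linarith)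
    have hhigh : μtilde0 < S (c0s φ0 + ε') φ0 := by
      rw [← hS_c0s φ0]; exact hSmono φ0 hc (by linarith)
    have e1 : ∀ᶠ φ in nhds φ0, S (c0s φ0 - ε') φ < μtilde0 :=
      Tendsto.eventually_lt_const hlow ((hScont _).tendsto φ0)
    have e2 : ∀ᶠ φ in nhds φ0, μtilde0 < S (c0s φ0 + ε') φ :=
      Tendsto.eventually_const_lt hhigh ((hScont _).tendsto φ0)
    filter_upwards [e1, e2] with φ h1 h2
    have hub : c0s φ < c0s φ0 + ε' := by
      by_contra hcon
      push_neg at hcon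
      have hSS := hSle φ (by linarith : (0:ℝ) < c0s φ0 + ε') hcon
      linarith [hS_c0s φ]
    have hlb : c0s φ0 - ε' < c0s φ := by
      by_contra hcon
      push_neg at hcon
      have hSS := hSle φ (hc0spos φ) hcon
      linarith [hS_c0s φ]
    rw [Real.dist_eq, abs_lt]
    constructor <;> linarith
  have hlogc : Continuous fun φ => Real.log (c0s φ) := by
    rw [continuous_iff_continuousAt]
    intro φ
    exact (Real.continuousAt_log (hc0spos φ).ne').comp hc0s_cont.continuousAt
  have hfcont : Continuous (fun φ => F (c0s φ) φ) := by
    simp only [hF_def]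
    apply continuous_finset_sum
    intro j _
    apply continuous_const.mul
    apply Real.continuous_exp.comp
    simp only [hu_def]
    exact (continuous_const.mul hlogc).add (by fun_prop)
  -- existence of a root
  have hfuneq : (fun φ : ℝ => ∑ i ∈ Finset.Icc 1 N,
      z i * ((c0s φ) ^ (lam i / lam 0) * Real.exp (μbar i - z i * φ))) = fun φ => F (c0s φ) φ :=
    funext hfstar
  rw [hfuneq] at hm hM
  have hmst : mstar < -ρ₀ := by linarith
  have hMst : -ρ₀ < Mstar := by linarith
  obtain ⟨b, hb⟩ := (Tendsto.eventually_lt_const hmst hm).exists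
  obtain ⟨a', ha'⟩ := (Tendsto.eventually_const_lt hMst hM).exists
  have hmem : -ρ₀ ∈ uIcc (F (c0s a') a') (F (c0s b) b) := by
    rw [Set.mem_uIcc]
    right
    exact ⟨hb.le, ha'.le⟩
  obtain ⟨φs0, _, hφs0⟩ := intermediate_value_uIcc
    (f := fun φ => F (c0s φ) φ) hfcont.continuousOn hmem
  have hφs0' : F (c0s φs0) φs0 = -ρ₀ := hφs0
  -- Λ-antitonicity
  have hantiΛ : ∀ Λ : ℝ, 0 < Λ → ∀ ψ1 ψ2 : ℝ, ψ1 ≤ ψ2 →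
      F (c0 Λ ψ2) ψ2 ≤ F (c0 Λ ψ1) ψ1 := by
    intro Λ hΛ ψ1 ψ2 h12
    rcases eq_or_lt_of_le h12 with rfl | h
    · exact le_refl _
    have h1 := hS_c0 Λ hΛ ψ1
    have h2 := hS_c0 Λ hΛ ψ2
    have hk := key (c0 Λ ψ1) (c0 Λ ψ2) ψ1 ψ2
    rw [hFfF, hFfF] at hk
    have hΛl : 0 < Λ * lam 0 := mul_pos hΛ hlam0
    have hS21 : S (c0 Λ ψ2) ψ2 - S (c0 Λ ψ1) ψ1
        = (Real.log (c0 Λ ψ1) - Real.log (c0 Λ ψ2)) / (Λ * lam 0) := by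
      field_simp
      linarith
    have ht : (Real.log (c0 Λ ψ2) - Real.log (c0 Λ ψ1))
        * (S (c0 Λ ψ2) ψ2 - S (c0 Λ ψ1) ψ1) ≤ 0 := by
      rw [hS21]
      have heq2 : (Real.log (c0 Λ ψ2) - Real.log (c0 Λ ψ1))
          * ((Real.log (c0 Λ ψ1) - Real.log (c0 Λ ψ2)) / (Λ * lam 0))
          = -((Real.log (c0 Λ ψ2) - Real.log (c0 Λ ψ1))^2 / (Λ * lam 0)) := by
        ring
      rw [heq2]
      exact neg_nonpos.2 (div_nonneg (sq_nonneg _) hΛl.le)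
    nlinarith [mul_pos (sub_pos.2 h) hlam0]
  -- pointwise convergence of c0 Λ φ to c0s φ
  have hc0tend : ∀ φ : ℝ, Tendsto (fun Λ => c0 Λ φ) atTop (nhds (c0s φ)) := by
    intro φ
    rw [Metric.tendsto_nhds]
    intro ε hε
    have hc := hc0spos φ
    set ε' := min ε (c0s φ / 2) with hε'_def
    have hε' : 0 < ε' := lt_min hε (by linarith)
    have hε'le : ε' ≤ ε := min_le_left _ _
    have hε'half : ε' ≤ c0s φ / 2 := min_le_right _ _
    have hpos1 : 0 < c0s φ - ε' := by linarith
    have hpos2 : 0 < c0s φ + ε' := by linarith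
    have hlow : S (c0s φ - ε') φ < μtilde0 := by
      rw [← hS_c0s φ]; exact hSmono φ hpos1 (by linarith)
    have hhigh : μtilde0 < S (c0s φ + ε') φ := by
      rw [← hS_c0s φ]; exact hSmono φ hc (by linarith)
    set δp := S (c0s φ + ε') φ - μtilde0 with hδp
    set δm := μtilde0 - S (c0s φ - ε') φ with hδm
    have hδpp : 0 < δp := by rw [hδp]; linarith
    have hδmp : 0 < δm := by rw [hδm]; linarith
    have E1 : ∀ᶠ Λ : ℝ in atTop, μhat 0 - Real.log (c0s φ + ε') < Λ * (lam 0 * δp) :=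
      (tendsto_id.atTop_mul_const (mul_pos hlam0 hδpp)).eventually_gt_atTop _
    have E2 : ∀ᶠ Λ : ℝ in atTop, Real.log (c0s φ - ε') - μhat 0 < Λ * (lam 0 * δm) :=
      (tendsto_id.atTop_mul_const (mul_pos hlam0 hδmp)).eventually_gt_atTop _
    filter_upwards [E1, E2, eventually_gt_atTop (0:ℝ)] with Λ h1 h2 hΛ
    have hcΛ := hc0pos Λ hΛ φ
    have heq := hS_c0 Λ hΛ φ
    have hΛl : 0 < Λ * lam 0 := mul_pos hΛ hlam0
    have hub : c0 Λ φ < c0s φ + ε' := by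
      by_contra hcon
      push_neg at hcon
      have hSS : μtilde0 + δp ≤ S (c0 Λ φ) φ := by
        have h' := hSle φ hpos2 hcon
        rw [hδp]
        linarith
      have hll : Real.log (c0s φ + ε') ≤ Real.log (c0 Λ φ) := Real.log_le_log hpos2 hcon
      have hP := mul_le_mul_of_nonneg_left hSS hΛl.le
      linarith only [hP, hll, h1, heq]
    have hlb : c0s φ - ε' < c0 Λ φ := by
      by_contra hcon
      push_neg at hcon
      have hSS : S (c0 Λ φ) φ ≤ μtilde0 - δm := by
        have h' := hSle φ hcΛ hcon
        rw [hδm]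
        linarith
      have hll : Real.log (c0 Λ φ) ≤ Real.log (c0s φ - ε') := Real.log_le_log hcΛ hcon
      have hP := mul_le_mul_of_nonneg_left hSS hΛl.le
      linarith only [hP, hll, h2, heq]
    rw [Real.dist_eq, abs_lt]
    constructor <;> linarith
  -- pointwise convergence of f_Λ to f^*
  have conv : ∀ φ : ℝ, Tendsto (fun Λ => F (c0 Λ φ) φ) atTop (nhds (F (c0s φ) φ)) := by
    intro φ
    have hx : Tendsto (fun x : ℝ => F x φ) (nhds (c0s φ)) (nhds (F (c0s φ) φ)) := by
      simp only [hF_def]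
      apply tendsto_finset_sum
      intro j _
      apply Filter.Tendsto.const_mul
      apply (Real.continuous_exp.tendsto _).comp
      simp only [hu_def]
      exact (Filter.Tendsto.const_mul _ (Real.continuousAt_log (hc0spos φ).ne')).add
        tendsto_const_nhds
    exact hx.comp (hc0tend φ)
  constructor
  · -- existence and uniqueness
    refine ⟨φs0, ?_, ?_⟩
    · simp only [hfstar φs0, hφs0']; ring
    · intro y hy
      simp only [hfstar y] at hy
      have hy' : F (c0s y) y = -ρ₀ := by linarith
      by_contra hne
      rcases lt_or_gt_of_ne hne with h | h
      · have := hanti_star y φs0 h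
        rw [hy', hφs0'] at this
        exact lt_irrefl _ this
      · have := hanti_star φs0 y h
        rw [hy', hφs0'] at this
        exact lt_irrefl _ this
  · -- convergence
    intro φs hφs φhat hφhat
    have hφs' : F (c0s φs) φs = -ρ₀ := by
      rw [hfstar] at hφs; linarith
    rw [Metric.tendsto_nhds]
    intro ε hε
    have h1 : -ρ₀ < F (c0s (φs - ε/2)) (φs - ε/2) := by
      have := hanti_star (φs - ε/2) φs (by linarith)
      rw [hφs'] at this
      linarith
    have h2 : F (c0s (φs + ε/2)) (φs + ε/2) < -ρ₀ := by
      have := hanti_star φs (φs + ε/2) (by linarith)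
      rw [hφs'] at this
      linarith
    have e1 := Tendsto.eventually_const_lt h1 (conv (φs - ε/2))
    have e2 := Tendsto.eventually_lt_const h2 (conv (φs + ε/2))
    filter_upwards [e1, e2, eventually_gt_atTop (0:ℝ)] with Λ hΛ1 hΛ2 hΛ
    have hhat : F (c0 Λ (φhat Λ)) (φhat Λ) = -ρ₀ := by
      have hh := hφhat Λ hΛ
      have he : (∑ i ∈ Finset.Icc 1 N, z i * ((c0 Λ (φhat Λ)) ^ (lam i / lam 0)
          * Real.exp (μbar i - z i * (φhat Λ)))) = F (c0 Λ (φhat Λ)) (φhat Λ) := by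
        apply Finset.sum_congr rfl
        intro i _
        rw [hterm (hc0pos Λ hΛ _)]
      rw [he] at hh
      linarith
    have hub : φhat Λ < φs + ε/2 := by
      by_contra hcon
      push_neg at hcon
      have := hantiΛ Λ hΛ (φs + ε/2) (φhat Λ) hcon
      rw [hhat] at this
      linarith
    have hlb : φs - ε/2 < φhat Λ := by
      by_contra hcon
      push_neg at hcon
      have := hantiΛ Λ hΛ (φhat Λ) (φs - ε/2) hcon
      rw [hhat] at this
      linarith
    rw [Real.dist_eq, abs_lt]
    constructor <;> linarith
end
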